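/- arXiv:1310.6619 — 3 statements merged into one kernel-verified Lean document; each statement's English description precedes it below -/
import Mathlib

section
/- Let 1 ≤ p < 2 and let g be a measurable function on the unit circle such that g·f ∈ L^p(𝕋) for every f ∈ L^2(𝕋). Then g ∈ L^{2p/(2-p)}(𝕋). -/
open MeasureTheory Complex ComplexConjugate
open scoped ENNReal

noncomputable section

instance : Fact ((0:ℝ) < 1) := ⟨zero_lt_one⟩

abbrev T1 := AddCircle (1:ℝ)

def zfun : T1 → ℂ := fun t => fourier 1 t

def hInner (f g : T1 → ℂ) : ℂ := ∫ t, f t * conj (g t)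

def MemHp (p : ℝ≥0∞) (f : T1 → ℂ) : Prop :=
  MemLp f p volume ∧ ∀ n : ℤ, n < 0 → fourierCoeff f n = 0

def blaschke {n : ℕ} (α : Fin n → ℂ) : T1 → ℂ :=
  fun t => ∏ i, (zfun t - α i) / (1 - conj (α i) * zfun t)

def MemH2B (B f : T1 → ℂ) : Prop :=
  MemHp 2 f ∧ ∀ ε : ℝ, 0 < ε → ∃ c : ℕ →₀ ℂ,
    eLpNorm (fun t => f t - ∑ m ∈ c.support, c m * (B t) ^ m) 2 volume < ENNReal.ofReal ε

open Filter Topology in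
theorem multiplier_L2_to_Lp (p : ℝ) (hp1 : 1 ≤ p) (hp2 : p < 2) (g : T1 → ℂ)
    (hgm : Measurable g)
    (hmul : ∀ f : T1 → ℂ, MemLp f 2 volume →
      MemLp (fun t => g t * f t) (ENNReal.ofReal p) volume) :
    MemLp g (ENNReal.ofReal (2 * p / (2 - p))) volume := by
  have hp0 : 0 < p := lt_of_lt_of_le zero_lt_one hp1
  have h2p : 0 < 2 - p := by linarith
  set r : ℝ := 2 * p / (2 - p) with hrdef
  have hr0 : 0 < r := by positivity
  set s : ℝ := p / (2 - p) with hsdef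
  have hs0 : 0 < s := by positivity
  have h2s : s * 2 = r := by rw [hsdef, hrdef]; ring
  have hps : (1 + s) * p = r := by
    rw [hsdef, hrdef]
    field_simp
    ring
  set P := ENNReal.ofReal p with hPdef
  have hP1 : 1 ≤ P := by
    rw [hPdef, ← ENNReal.ofReal_one]
    exact ENNReal.ofReal_le_ofReal hp1
  haveI : Fact (1 ≤ P) := ⟨hP1⟩
  have hP0 : P ≠ 0 := by
    rw [hPdef]
    simpa using hp0
  have hPtop : P ≠ ∞ := ENNReal.ofReal_ne_top
  have hPto : P.toReal = p := ENNReal.toReal_ofReal hp0.le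
  -- the multiplication operator as a linear map between Lp spaces
  let T : Lp ℂ 2 (volume : Measure T1) →ₗ[ℂ] Lp ℂ P (volume : Measure T1) :=
  { toFun := fun f => MemLp.toLp _ (hmul f (Lp.memLp f))
    map_add' := by
      intro f₁ f₂
      apply Lp.ext
      filter_upwards [MemLp.coeFn_toLp (hmul _ (Lp.memLp (f₁ + f₂))),
        MemLp.coeFn_toLp (hmul _ (Lp.memLp f₁)), MemLp.coeFn_toLp (hmul _ (Lp.memLp f₂)),
        Lp.coeFn_add f₁ f₂,
        Lp.coeFn_add (MemLp.toLp _ (hmul _ (Lp.memLp f₁))) (MemLp.toLp _ (hmul _ (Lp.memLp f₂)))]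
        with t h1 h2 h3 h4 h5
      simp only [h1, h5, Pi.add_apply, h2, h3, h4, mul_add]
    map_smul' := by
      intro c f
      apply Lp.ext
      filter_upwards [MemLp.coeFn_toLp (hmul _ (Lp.memLp (c • f))),
        MemLp.coeFn_toLp (hmul _ (Lp.memLp f)), Lp.coeFn_smul c f,
        Lp.coeFn_smul c (MemLp.toLp _ (hmul _ (Lp.memLp f)))] with t h1 h2 h3 h4
      simp only [h1, h4, Pi.smul_apply, h2, h3, smul_eq_mul, RingHom.id_apply]
      ring }
  have hTcoe : ∀ f : Lp ℂ 2 (volume : Measure T1),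
      (T f : T1 → ℂ) =ᵐ[volume] fun t => g t * (f : T1 → ℂ) t :=
    fun f => MemLp.coeFn_toLp (hmul _ (Lp.memLp f))
  -- closed graph
  have hTcl : ∀ (u : ℕ → Lp ℂ 2 (volume : Measure T1)) x y,
      Tendsto u atTop (𝓝 x) → Tendsto (T ∘ u) atTop (𝓝 y) → y = T x := by
    intro u x y hux huy
    obtain ⟨ns, hns, hae⟩ := (tendstoInMeasure_of_tendsto_Lp hux).exists_seq_tendsto_ae
    have huy2 : Tendsto (fun k => T (u (ns k))) atTop (𝓝 y) := huy.comp hns.tendsto_atTop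
    obtain ⟨ms, hms, hae2⟩ := (tendstoInMeasure_of_tendsto_Lp huy2).exists_seq_tendsto_ae
    apply Lp.ext
    have hcoeall : ∀ᵐ t ∂(volume : Measure T1), ∀ j,
        (T (u j) : T1 → ℂ) t = g t * (u j : T1 → ℂ) t := ae_all_iff.mpr fun j => hTcoe (u j)
    filter_upwards [hae, hae2, hcoeall, hTcoe x] with t h1 h2 h3 h4
    have l1 : Tendsto (fun i => g t * (u (ns (ms i)) : T1 → ℂ) t) atTop
        (𝓝 (g t * (x : T1 → ℂ) t)) := (h1.comp hms.tendsto_atTop).const_mul _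
    have l2 : Tendsto (fun i => g t * (u (ns (ms i)) : T1 → ℂ) t) atTop
        (𝓝 ((y : T1 → ℂ) t)) := h2.congr fun i => h3 (ns (ms i))
    rw [h4]
    exact tendsto_nhds_unique l2 l1
  let Tc : Lp ℂ 2 (volume : Measure T1) →L[ℂ] Lp ℂ P (volume : Measure T1) :=
    ⟨T, T.continuous_of_seq_closed_graph hTcl⟩
  set C : ℝ≥0∞ := ENNReal.ofReal ‖Tc‖ with hCdef
  have hCtop : C ≠ ∞ := ENNReal.ofReal_ne_top
  -- quantitative bound
  have hbound : ∀ f : T1 → ℂ, (hf : MemLp f 2 volume) →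
      eLpNorm (fun t => g t * f t) P volume ≤ C * eLpNorm f 2 volume := by
    intro f hf
    have h1 : eLpNorm (fun t => g t * f t) P volume
        = eLpNorm (Tc (hf.toLp f) : T1 → ℂ) P volume := by
      refine (eLpNorm_congr_ae ?_).symm
      filter_upwards [hTcoe (hf.toLp f), hf.coeFn_toLp] with t h1 h2
      show (T (hf.toLp f) : T1 → ℂ) t = g t * f t
      rw [h1, h2]
    rw [h1]
    have hfin : eLpNorm (Tc (hf.toLp f) : T1 → ℂ) P volume ≠ ∞ := Lp.eLpNorm_ne_top _
    calc eLpNorm (Tc (hf.toLp f) : T1 → ℂ) P volume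
        = ENNReal.ofReal ‖Tc (hf.toLp f)‖ := by rw [Lp.norm_def, ENNReal.ofReal_toReal hfin]
      _ ≤ ENNReal.ofReal (‖Tc‖ * ‖hf.toLp f‖) :=
          ENNReal.ofReal_le_ofReal (Tc.le_opNorm _)
      _ = C * ENNReal.ofReal ‖hf.toLp f‖ := ENNReal.ofReal_mul (norm_nonneg _)
      _ = C * eLpNorm f 2 volume := by
          rw [Lp.norm_def, ENNReal.ofReal_toReal (Lp.eLpNorm_ne_top _)]
          congr 1
          exact eLpNorm_congr_ae hf.coeFn_toLp
  -- truncations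
  have hsm : Measurable fun t : T1 => ((‖g t‖ ^ s : ℝ) : ℂ) :=
    Complex.measurable_ofReal.comp (hgm.norm.pow measurable_const)
  set F : ℕ → T1 → ℂ := fun n t => if ‖g t‖ ≤ (n : ℝ) then ((‖g t‖ ^ s : ℝ) : ℂ) else 0
    with hFdef
  have hmeasset : ∀ n : ℕ, MeasurableSet {t : T1 | ‖g t‖ ≤ (n : ℝ)} :=
    fun n => measurableSet_le hgm.norm measurable_const
  have hFmeas : ∀ n, Measurable (F n) := fun n =>
    Measurable.ite (hmeasset n) hsm measurable_const
  have hFbdd : ∀ n : ℕ, ∀ t, ‖F n t‖ ≤ (n : ℝ) ^ s := by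
    intro n t
    simp only [hFdef]
    split_ifs with h
    · rw [Complex.norm_real, Real.norm_eq_abs, _root_.abs_of_nonneg (Real.rpow_nonneg (norm_nonneg _) _)]
      exact Real.rpow_le_rpow (norm_nonneg _) h hs0.le
    · simpa using Real.rpow_nonneg (Nat.cast_nonneg n) s
  have hFmem : ∀ n, MemLp (F n) 2 volume := fun n =>
    MemLp.mono_exponent (memLp_top_of_bound (hFmeas n).aestronglyMeasurable _
      (Filter.Eventually.of_forall (hFbdd n))) le_top
  set J : ℕ → ℝ≥0∞ := fun n =>
    ∫⁻ t, (if ‖g t‖ ≤ (n : ℝ) then (‖g t‖₊ : ℝ≥0∞) ^ r else 0) with hJdef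
  have hnn : ∀ t : T1, ((‖((‖g t‖ ^ s : ℝ) : ℂ)‖₊ : ℝ≥0∞)) = (‖g t‖₊ : ℝ≥0∞) ^ s := by
    intro t
    rw [Complex.nnnorm_real, ← enorm_eq_nnnorm (g t), ← enorm_eq_nnnorm (‖g t‖ ^ s),
      Real.enorm_eq_ofReal (Real.rpow_nonneg (norm_nonneg _) _),
      ← ENNReal.ofReal_rpow_of_nonneg (norm_nonneg (g t)) hs0.le, ofReal_norm]
  have hF2 : ∀ n, eLpNorm (F n) 2 volume = (J n) ^ (1 / (2:ℝ)) := by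
    intro n
    rw [eLpNorm_eq_lintegral_rpow_enorm_toReal two_ne_zero ENNReal.ofNat_ne_top, ENNReal.toReal_ofNat]
    congr 1
    refine lintegral_congr fun t => ?_
    simp only [hFdef]
    split_ifs with h
    · rw [enorm_eq_nnnorm, hnn t, ← ENNReal.rpow_mul, h2s]
    · simp [ENNReal.zero_rpow_of_pos (by norm_num : (0:ℝ) < 2)]
  have hgF : ∀ n, eLpNorm (fun t => g t * F n t) P volume = (J n) ^ (1 / p) := by
    intro n
    rw [eLpNorm_eq_lintegral_rpow_enorm_toReal hP0 hPtop, hPto]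
    congr 1
    refine lintegral_congr fun t => ?_
    simp only [hFdef]
    split_ifs with h
    · rw [enorm_eq_nnnorm, nnnorm_mul, ENNReal.coe_mul, hnn t]
      rcases eq_or_ne (‖g t‖₊ : ℝ≥0∞) 0 with h0 | h0
      · rw [h0, ENNReal.zero_rpow_of_pos hs0, mul_zero, ENNReal.zero_rpow_of_pos hp0,
          ENNReal.zero_rpow_of_pos hr0]
      · have htop : (‖g t‖₊ : ℝ≥0∞) ≠ ∞ := ENNReal.coe_ne_top
        have : (‖g t‖₊ : ℝ≥0∞) * (‖g t‖₊ : ℝ≥0∞) ^ s = (‖g t‖₊ : ℝ≥0∞) ^ ((1:ℝ) + s) := by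
          rw [ENNReal.rpow_add _ _ h0 htop, ENNReal.rpow_one]
        rw [this, ← ENNReal.rpow_mul, hps]
    · simp [ENNReal.zero_rpow_of_pos hp0]
  have hJfin : ∀ n, J n ≠ ∞ := by
    intro n
    have hb : J n ≤ ((n : ℝ≥0∞)) ^ r * volume (Set.univ : Set T1) := by
      rw [hJdef]
      calc ∫⁻ t, (if ‖g t‖ ≤ (n : ℝ) then (‖g t‖₊ : ℝ≥0∞) ^ r else 0)
          ≤ ∫⁻ _t, (n : ℝ≥0∞) ^ r ∂(volume : Measure T1) := by
            refine lintegral_mono fun t => ?_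
            split_ifs with h
            · refine ENNReal.rpow_le_rpow ?_ hr0.le
              rw [← enorm_eq_nnnorm, ← ofReal_norm, ← ENNReal.ofReal_natCast]
              exact ENNReal.ofReal_le_ofReal h
            · exact zero_le
        _ = (n : ℝ≥0∞) ^ r * volume Set.univ := lintegral_const _
    refine (lt_of_le_of_lt hb ?_).ne
    exact ENNReal.mul_lt_top
      (ENNReal.rpow_lt_top_of_nonneg hr0.le (ENNReal.natCast_ne_top n)) (measure_lt_top _ _)
  have hkey : ∀ n, J n ≤ C ^ r := by
    intro n
    rcases eq_or_ne (J n) 0 with hJ0 | hJ0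
    · rw [hJ0]; exact zero_le
    have hb := hbound (F n) (hFmem n)
    rw [hgF n, hF2 n] at hb
    have h2 : J n ≤ C ^ p * J n ^ (p / 2) := by
      calc J n = (J n ^ (1 / p)) ^ p := by
            rw [← ENNReal.rpow_mul, one_div_mul_cancel hp0.ne', ENNReal.rpow_one]
        _ ≤ (C * J n ^ (1 / (2:ℝ))) ^ p := ENNReal.rpow_le_rpow hb hp0.le
        _ = C ^ p * J n ^ (p / 2) := by
            rw [ENNReal.mul_rpow_of_nonneg _ _ hp0.le, ← ENNReal.rpow_mul]
            congr 1
            ring_nf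
    have h3 : J n ^ (1 - p / 2) ≤ C ^ p := by
      have hc0 : J n ^ (p / 2) ≠ 0 := by
        simp [ENNReal.rpow_eq_zero_iff, hJ0, hJfin n]
      have hctop : J n ^ (p / 2) ≠ ∞ := by
        simp [ENNReal.rpow_eq_top_iff, hJ0, hJfin n]
      rw [← ENNReal.mul_le_mul_iff_left hc0 hctop, ← ENNReal.rpow_add _ _ hJ0 (hJfin n)]
      have he : 1 - p / 2 + p / 2 = 1 := by ring
      rw [he, ENNReal.rpow_one]
      exact h2
    have hden : (0:ℝ) < 1 - p / 2 := by linarith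
    calc J n = (J n ^ (1 - p / 2)) ^ (1 / (1 - p / 2)) := by
          rw [← ENNReal.rpow_mul, mul_one_div_cancel hden.ne', ENNReal.rpow_one]
      _ ≤ (C ^ p) ^ (1 / (1 - p / 2)) := ENNReal.rpow_le_rpow h3 (by positivity)
      _ = C ^ r := by
          rw [← ENNReal.rpow_mul]
          congr 1
          rw [hrdef]
          field_simp
  have hint : ∫⁻ t, (‖g t‖₊ : ℝ≥0∞) ^ r ≤ C ^ r := by
    have hmono : Monotone fun n : ℕ => fun t : T1 =>
        (if ‖g t‖ ≤ (n : ℝ) then (‖g t‖₊ : ℝ≥0∞) ^ r else 0) := by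
      intro n m hnm t
      dsimp only
      split_ifs with h1 h2
      · exact le_rfl
      · exact absurd (h1.trans (Nat.cast_le.mpr hnm)) h2
      · exact zero_le
      · exact le_rfl
    have heq : ∀ t : T1,
        (⨆ n : ℕ, (if ‖g t‖ ≤ (n : ℝ) then (‖g t‖₊ : ℝ≥0∞) ^ r else 0))
          = (‖g t‖₊ : ℝ≥0∞) ^ r := by
      intro t
      refine le_antisymm (iSup_le fun n => ?_) (le_iSup_of_le ⌈‖g t‖⌉₊ ?_)
      · split_ifs
        exacts [le_rfl, zero_le]
      · rw [if_pos (Nat.le_ceil _)]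
    calc ∫⁻ t, (‖g t‖₊ : ℝ≥0∞) ^ r
        = ∫⁻ t, ⨆ n : ℕ, (if ‖g t‖ ≤ (n : ℝ) then (‖g t‖₊ : ℝ≥0∞) ^ r else 0) :=
          (lintegral_congr heq).symm
      _ = ⨆ n, J n :=
          lintegral_iSup
            (fun n => Measurable.ite (hmeasset n)
              (hgm.enorm.pow measurable_const) measurable_const) hmono
      _ ≤ C ^ r := iSup_le hkey
  refine ⟨hgm.aestronglyMeasurable, ?_⟩
  have hR0 : (ENNReal.ofReal r) ≠ 0 := by
    simp [ENNReal.ofReal_eq_zero, not_le, hr0]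
  have hRtop : (ENNReal.ofReal r) ≠ ∞ := ENNReal.ofReal_ne_top
  rw [eLpNorm_eq_lintegral_rpow_enorm_toReal hR0 hRtop, ENNReal.toReal_ofReal hr0.le]
  refine ENNReal.rpow_lt_top_of_nonneg (by positivity) ?_
  exact (lt_of_le_of_lt hint (ENNReal.rpow_lt_top_of_nonneg hr0.le hCtop)).ne
end
end

section
/- Let B(z) = ∏_{i=1}^n (z − α_i)/(1 − conj(α_i) z) be a finite Blaschke product with B(0)=0 (α₁ = 0), and for 0 ≤ j ≤ n−1, m ≥ 0 define e_{j,m} = B^m · (∏_{i=1}^{j} (z−α_i)/(1−conj(α_i)z)) · √(1−|α_{j+1}|²)/(1−conj(α_{j+1})z). Then {e_{j,m} : 0 ≤ j ≤ n−1, m ∈ ℕ} is an orthonormal set in H^2(𝕋). -/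
open MeasureTheory Complex ComplexConjugate
open scoped ENNReal

noncomputable section

def singhThukral {n : ℕ} (α : Fin n → ℂ) (j : Fin n) (m : ℕ) : T1 → ℂ :=
  fun t => (blaschke α t) ^ m *
    (∏ i ∈ Finset.Iio j, (zfun t - α i) / (1 - conj (α i) * zfun t)) *
    ((Real.sqrt (1 - ‖α j‖ ^ 2) : ℂ) / (1 - conj (α j) * zfun t))

/-! ### Auxiliary material -/

section Aux

open Metric intervalIntegral
open scoped Real

lemma zfun_coe (s : ℝ) : zfun (s : T1) = circleMap 0 1 (2 * π * s) := by
  rw [zfun, fourier_coe_apply, circleMap]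
  push_cast
  rw [zero_add, one_mul]
  congr 1
  ring

lemma integral_T1 (G : ℂ → ℂ) :
    ∫ t : T1, G (zfun t) = (2 * π)⁻¹ • ∫ θ in (0:ℝ)..(2*π), G (circleMap 0 1 θ) := by
  have h1 : ∫ t : T1, G (zfun t) = ∫ s in (0:ℝ)..(0+1), G (zfun s) :=
    (AddCircle.intervalIntegral_preimage 1 0 (fun t => G (zfun t))).symm
  rw [h1]
  have h2 : ∀ s : ℝ, G (zfun (s : T1)) = (fun θ => G (circleMap 0 1 θ)) (2 * π * s) := by
    intro s; rw [zfun_coe]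
  simp only [h2]
  rw [intervalIntegral.integral_comp_mul_left (fun θ => G (circleMap 0 1 θ))
    (by positivity : (2*π:ℝ) ≠ 0)]
  norm_num

lemma integral_analytic (G : ℂ → ℂ)
    (hG : ∀ z ∈ closedBall (0:ℂ) 1, DifferentiableAt ℂ G z) :
    ∫ t : T1, G (zfun t) = G 0 := by
  have hD : DiffContOnCl ℂ G (ball (0:ℂ) 1) :=
    ⟨fun z hz => (hG z (ball_subset_closedBall hz)).differentiableWithinAt,
     by rw [closure_ball (0:ℂ) one_ne_zero]
        exact fun z hz => (hG z hz).continuousAt.continuousWithinAt⟩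
  have h := hD.circleIntegral_sub_inv_smul (w := 0) (mem_ball_self one_pos)
  rw [circleIntegral] at h
  have key : ∀ θ : ℝ, (deriv (circleMap 0 1) θ) •
      ((circleMap 0 1 θ - 0)⁻¹ • G (circleMap 0 1 θ)) = I * G (circleMap 0 1 θ) := by
    intro θ
    have hz : circleMap 0 1 θ ≠ 0 := circleMap_ne_center one_ne_zero
    rw [deriv_circleMap, smul_eq_mul, smul_eq_mul, sub_zero]
    field_simp
  simp only [key] at h
  rw [intervalIntegral.integral_const_mul] at h
  have hI : (I : ℂ) ≠ 0 := I_ne_zero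
  have h2 : ∫ θ in (0:ℝ)..(2*π), G (circleMap 0 1 θ) = 2 * π * G 0 := by
    apply mul_left_cancel₀ hI
    rw [h]
    simp [smul_eq_mul]
    ring
  rw [integral_T1, h2]
  rw [real_smul]
  push_cast
  have : (π:ℂ) ≠ 0 := by exact_mod_cast Real.pi_ne_zero
  field_simp

lemma integral_pole (a : ℂ) (ha : ‖a‖ < 1) :
    ∫ t : T1, zfun t * (zfun t - a)⁻¹ = 1 := by
  have hmem : a ∈ ball (0:ℂ) 1 := by simpa [mem_ball, dist_eq_norm] using ha
  have h := circleIntegral.integral_sub_inv_of_mem_ball hmem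
  rw [circleIntegral] at h
  have key : ∀ θ : ℝ, (deriv (circleMap 0 1) θ) • ((circleMap 0 1 θ - a)⁻¹)
      = I * (circleMap 0 1 θ * (circleMap 0 1 θ - a)⁻¹) := by
    intro θ
    rw [deriv_circleMap, smul_eq_mul]
    ring
  simp only [key] at h
  rw [intervalIntegral.integral_const_mul] at h
  have h2 : ∫ θ in (0:ℝ)..(2*π), circleMap 0 1 θ * (circleMap 0 1 θ - a)⁻¹ = 2 * π := by
    apply mul_left_cancel₀ I_ne_zero
    rw [h]; ring
  rw [integral_T1 (fun z => z * (z - a)⁻¹), h2]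
  rw [real_smul]
  push_cast
  have : (π:ℂ) ≠ 0 := by exact_mod_cast Real.pi_ne_zero
  field_simp

/-! ### Blaschke factors -/

def bl (a z : ℂ) : ℂ := (z - a) / (1 - conj a * z)

variable {a z : ℂ}

lemma one_sub_ne (ha : ‖a‖ < 1) (hz : ‖z‖ ≤ 1) : 1 - conj a * z ≠ 0 := by
  intro h
  have h2 : (1:ℂ) = conj a * z := by linear_combination h
  have : (1:ℝ) = ‖conj a * z‖ := by rw [← h2]; simp
  rw [norm_mul, RCLike.norm_conj] at this
  nlinarith [norm_nonneg a, norm_nonneg z]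

lemma sub_ne (ha : ‖a‖ < 1) (hz : ‖z‖ = 1) : z - a ≠ 0 := by
  intro h
  rw [sub_eq_zero] at h
  rw [h] at hz
  exact absurd hz (ne_of_lt ha)

lemma z_ne (hz : ‖z‖ = 1) : z ≠ 0 := by
  intro h; rw [h] at hz; simp at hz

lemma conj_z (hz : ‖z‖ = 1) : conj z = z⁻¹ :=
  (Complex.inv_eq_conj (by exact hz)).symm

lemma bl_ne (ha : ‖a‖ < 1) (hz : ‖z‖ = 1) : bl a z ≠ 0 :=
  div_ne_zero (sub_ne ha hz) (one_sub_ne ha hz.le)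

lemma conj_one_sub (hz : ‖z‖ = 1) : conj (1 - conj a * z) = (z - a) * z⁻¹ := by
  rw [map_sub, map_one, map_mul, conj_conj, conj_z hz]
  field_simp [z_ne hz]

lemma conj_bl (ha : ‖a‖ < 1) (hz : ‖z‖ = 1) : conj (bl a z) = (bl a z)⁻¹ := by
  have hza := sub_ne ha hz
  have hz0 := z_ne hz
  rw [bl, map_div₀, conj_one_sub hz, map_sub, conj_z hz, inv_div]
  rw [div_eq_div_iff (mul_ne_zero hza (inv_ne_zero hz0)) hza]
  field_simp

end Aux

section ProdFacts
variable {n : ℕ} {α : Fin n → ℂ} {z : ℂ}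

lemma prod_bl_ne (hα : ∀ i, ‖α i‖ < 1) (hz : ‖z‖ = 1) (s : Finset (Fin n)) :
    (∏ i ∈ s, bl (α i) z) ≠ 0 :=
  Finset.prod_ne_zero_iff.2 fun i _ => bl_ne (hα i) hz

lemma conj_prod_bl (hα : ∀ i, ‖α i‖ < 1) (hz : ‖z‖ = 1) (s : Finset (Fin n)) :
    conj (∏ i ∈ s, bl (α i) z) = (∏ i ∈ s, bl (α i) z)⁻¹ := by
  rw [map_prod, ← Finset.prod_inv_distrib]
  exact Finset.prod_congr rfl fun i _ => conj_bl (hα i) hz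

lemma prod_univ_split (k : Fin n) (f : Fin n → ℂ) :
    ∏ i, f i = (∏ i ∈ Finset.Iio k, f i) * (f k * ∏ i ∈ Finset.Ioi k, f i) := by
  have h1 : (Finset.univ : Finset (Fin n)) = Finset.Iio k ∪ Finset.Ici k := by
    ext i
    simp only [Finset.mem_univ, Finset.mem_union, Finset.mem_Iio, Finset.mem_Ici, true_iff]
    exact lt_or_ge i k
  have h2 : Disjoint (Finset.Iio k) (Finset.Ici k) := by
    simp only [Finset.disjoint_left, Finset.mem_Iio, Finset.mem_Ici]
    exact fun i h => not_le.2 h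
  rw [Finset.mul_prod_Ioi_eq_prod_Ici, h1, Finset.prod_union h2]

lemma prod_Iio_split {k j : Fin n} (hkj : k < j) (f : Fin n → ℂ) :
    ∏ i ∈ Finset.Iio j, f i
      = (∏ i ∈ Finset.Iio k, f i) * (f k * ∏ i ∈ Finset.Ioo k j, f i) := by
  have h1 : Finset.Iio j = Finset.Iio k ∪ Finset.Ico k j := by
    ext i
    simp only [Finset.mem_Iio, Finset.mem_union, Finset.mem_Ico]
    constructor
    · intro h
      rcases lt_or_ge i k with h' | h'
      · exact Or.inl h'
      · exact Or.inr ⟨h', h⟩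
    · rintro (h | ⟨-, h⟩)
      · exact h.trans hkj
      · exact h
  have h2 : Disjoint (Finset.Iio k) (Finset.Ico k j) := by
    simp only [Finset.disjoint_left, Finset.mem_Iio, Finset.mem_Ico]
    exact fun i h h' => absurd h'.1 (not_le.2 h)
  rw [h1, Finset.prod_union h2, ← Finset.Ioo_insert_left hkj,
    Finset.prod_insert Finset.left_notMem_Ioo]

end ProdFacts

def eC {n : ℕ} (α : Fin n → ℂ) (j : Fin n) (m : ℕ) (z : ℂ) : ℂ :=
  (∏ i, bl (α i) z) ^ m * (∏ i ∈ Finset.Iio j, bl (α i) z) *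
    ((Real.sqrt (1 - ‖α j‖ ^ 2) : ℂ) / (1 - conj (α j) * z))

lemma csq (a : ℂ) (ha : ‖a‖ < 1) :
    ((Real.sqrt (1 - ‖a‖ ^ 2) : ℝ) : ℂ) * ((Real.sqrt (1 - ‖a‖ ^ 2) : ℝ) : ℂ)
      = 1 - conj a * a := by
  rw [← Complex.ofReal_mul, Real.mul_self_sqrt (by nlinarith [norm_nonneg a])]
  have h : conj a * a = ((‖a‖ ^ 2 : ℝ) : ℂ) := by
    rw [mul_comm, Complex.mul_conj, Complex.normSq_eq_norm_sq]
  rw [h]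
  push_cast
  ring

lemma point_diag {n : ℕ} {α : Fin n → ℂ} (hα : ∀ i, ‖α i‖ < 1) (j : Fin n) (m : ℕ)
    {z : ℂ} (hz : ‖z‖ = 1) :
    eC α j m z * conj (eC α j m z)
      = z * (z - α j)⁻¹ + (conj (α j) * z) * (1 - conj (α j) * z)⁻¹ := by
  have hB := prod_bl_ne hα hz Finset.univ
  have hP := prod_bl_ne hα hz (Finset.Iio j)
  have hden := one_sub_ne (hα j) hz.le
  have hsub := sub_ne (hα j) hz
  have hz0 := z_ne hz
  rw [eC, map_mul, map_mul, map_pow, conj_prod_bl hα hz, conj_prod_bl hα hz, map_div₀,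
    Complex.conj_ofReal, conj_one_sub hz]
  have step1 : (∏ i, bl (α i) z) ^ m * (∏ i ∈ Finset.Iio j, bl (α i) z) *
      ((Real.sqrt (1 - ‖α j‖ ^ 2) : ℂ) / (1 - conj (α j) * z)) *
      (((∏ i, bl (α i) z)⁻¹) ^ m * (∏ i ∈ Finset.Iio j, bl (α i) z)⁻¹ *
        ((Real.sqrt (1 - ‖α j‖ ^ 2) : ℂ) / ((z - α j) * z⁻¹)))
      = ((Real.sqrt (1 - ‖α j‖ ^ 2) : ℂ) * (Real.sqrt (1 - ‖α j‖ ^ 2) : ℂ)) *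
        ((1 - conj (α j) * z)⁻¹ * z * (z - α j)⁻¹) := by
    field_simp [hB, hP, hden, hsub, hz0]
    rw [one_div, inv_pow]
    field_simp
  rw [step1, csq (α j) (hα j)]
  field_simp [hden, hsub, hz0]
  ring

lemma point_lt {n : ℕ} {α : Fin n → ℂ} (hα : ∀ i, ‖α i‖ < 1) {j k : Fin n} (hkj : k < j)
    (m : ℕ) {z : ℂ} (hz : ‖z‖ = 1) :
    eC α j m z * conj (eC α k m z)
      = (∏ i ∈ Finset.Ioo k j, bl (α i) z) *
          ((Real.sqrt (1 - ‖α j‖ ^ 2) : ℂ) * (Real.sqrt (1 - ‖α k‖ ^ 2) : ℂ)) *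
          (z * ((1 - conj (α j) * z)⁻¹ * (1 - conj (α k) * z)⁻¹)) := by
  have hB := prod_bl_ne hα hz Finset.univ
  have hC := prod_bl_ne hα hz (Finset.Iio k)
  have hdj := one_sub_ne (hα j) hz.le
  have hdk := one_sub_ne (hα k) hz.le
  have hsk := sub_ne (hα k) hz
  have hz0 := z_ne hz
  rw [eC, eC, map_mul, map_mul, map_pow, conj_prod_bl hα hz, conj_prod_bl hα hz, map_div₀,
    Complex.conj_ofReal, conj_one_sub hz, prod_Iio_split hkj]
  rw [show bl (α k) z = (z - α k) / (1 - conj (α k) * z) from rfl]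
  field_simp [hB, hC, hdj, hdk, hsk, hz0]
  rw [one_div, inv_pow]
  field_simp

lemma point_pow {n : ℕ} {α : Fin n → ℂ} (hα : ∀ i, ‖α i‖ < 1) (j k : Fin n)
    {m l : ℕ} (hlm : l < m) {z : ℂ} (hz : ‖z‖ = 1) :
    eC α j m z * conj (eC α k l z)
      = (∏ i, bl (α i) z) ^ (m - l - 1) * (∏ i ∈ Finset.Iio j, bl (α i) z) *
          (∏ i ∈ Finset.Ioi k, bl (α i) z) *
          ((Real.sqrt (1 - ‖α j‖ ^ 2) : ℂ) * (Real.sqrt (1 - ‖α k‖ ^ 2) : ℂ)) *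
          (z * ((1 - conj (α j) * z)⁻¹ * (1 - conj (α k) * z)⁻¹)) := by
  have hB := prod_bl_ne hα hz Finset.univ
  have hC := prod_bl_ne hα hz (Finset.Iio k)
  have hP := prod_bl_ne hα hz (Finset.Iio j)
  have hdj := one_sub_ne (hα j) hz.le
  have hdk := one_sub_ne (hα k) hz.le
  have hsk := sub_ne (hα k) hz
  have hz0 := z_ne hz
  have hpow : (∏ i, bl (α i) z) ^ m * ((∏ i, bl (α i) z)⁻¹) ^ l
      = (∏ i, bl (α i) z) ^ (m - l - 1) *
        ((∏ i ∈ Finset.Iio k, bl (α i) z) *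
          (bl (α k) z * ∏ i ∈ Finset.Ioi k, bl (α i) z)) := by
    have hml : (∏ i, bl (α i) z) ^ (m - l)
        = (∏ i, bl (α i) z) ^ (m - l - 1) * ∏ i, bl (α i) z := by
      rw [← pow_succ]
      congr 1
      omega
    rw [inv_pow, ← pow_sub₀ _ hB hlm.le, hml, ← prod_univ_split k (fun i => bl (α i) z)]
  rw [eC, eC, map_mul, map_mul, map_pow, conj_prod_bl hα hz, conj_prod_bl hα hz, map_div₀,
    Complex.conj_ofReal, conj_one_sub hz]
  have step1 : (∏ i, bl (α i) z) ^ m * (∏ i ∈ Finset.Iio j, bl (α i) z) *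
      ((Real.sqrt (1 - ‖α j‖ ^ 2) : ℂ) / (1 - conj (α j) * z)) *
      (((∏ i, bl (α i) z)⁻¹) ^ l * (∏ i ∈ Finset.Iio k, bl (α i) z)⁻¹ *
        ((Real.sqrt (1 - ‖α k‖ ^ 2) : ℂ) / ((z - α k) * z⁻¹)))
      = ((∏ i, bl (α i) z) ^ m * ((∏ i, bl (α i) z)⁻¹) ^ l) *
        ((∏ i ∈ Finset.Iio j, bl (α i) z) * (∏ i ∈ Finset.Iio k, bl (α i) z)⁻¹ *
          ((Real.sqrt (1 - ‖α j‖ ^ 2) : ℂ) / (1 - conj (α j) * z)) *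
          ((Real.sqrt (1 - ‖α k‖ ^ 2) : ℂ) / ((z - α k) * z⁻¹))) := by
    ring
  rw [step1, hpow]
  rw [show bl (α k) z = (z - α k) / (1 - conj (α k) * z) from rfl]
  field_simp [hB, hC, hdj, hdk, hsk, hz0]

/-! ### Topological facts -/

section Topo
open Metric

lemma cont_zfun : Continuous zfun := by
  have : Continuous fun t : T1 => (fourier 1 : C(T1, ℂ)) t := (fourier 1).continuous
  exact this

lemma norm_zfun (t : T1) : ‖zfun t‖ = 1 := by
  induction t using QuotientAddGroup.induction_on with
  | H s =>
    rw [zfun_coe]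
    rw [norm_circleMap_zero]
    norm_num

lemma integrable_cont {f : T1 → ℂ} (hf : Continuous f) : Integrable f volume :=
  hf.integrable_of_hasCompactSupport
    (IsCompact.of_isClosed_subset isCompact_univ (isClosed_tsupport f) (Set.subset_univ _))

lemma diff_bl {a : ℂ} (ha : ‖a‖ < 1) {z : ℂ} (hz : ‖z‖ ≤ 1) :
    DifferentiableAt ℂ (fun w => bl a w) z := by
  simp only [bl]
  exact DifferentiableAt.div (by fun_prop) (by fun_prop) (one_sub_ne ha hz)

lemma diff_prod {n : ℕ} {α : Fin n → ℂ} (hα : ∀ i, ‖α i‖ < 1) (s : Finset (Fin n))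
    {z : ℂ} (hz : ‖z‖ ≤ 1) :
    DifferentiableAt ℂ (fun w => ∏ i ∈ s, bl (α i) w) z :=
  DifferentiableAt.fun_finsetProd fun i _ => diff_bl (hα i) hz

lemma diff_inv_one_sub {a : ℂ} (ha : ‖a‖ < 1) {z : ℂ} (hz : ‖z‖ ≤ 1) :
    DifferentiableAt ℂ (fun w => (1 - conj a * w)⁻¹) z :=
  DifferentiableAt.inv (by fun_prop) (one_sub_ne ha hz)

lemma mem_closedBall_norm {z : ℂ} (hz : z ∈ closedBall (0:ℂ) 1) : ‖z‖ ≤ 1 := by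
  rwa [mem_closedBall, dist_eq_norm, sub_zero] at hz

end Topo

/-! ### The key computation -/

lemma hInner_conj (f g : T1 → ℂ) : hInner f g = conj (hInner g f) := by
  rw [hInner, hInner, ← integral_conj]
  congr 1
  funext t
  rw [map_mul, conj_conj, mul_comm]

lemma singhThukral_eq_eC {n : ℕ} (α : Fin n → ℂ) (j : Fin n) (m : ℕ) (t : T1) :
    singhThukral α j m t = eC α j m (zfun t) := rfl

lemma key_dom {n : ℕ} (α : Fin n → ℂ) (hα : ∀ i, ‖α i‖ < 1) (j k : Fin n) (m l : ℕ)
    (hdom : l < m ∨ (m = l ∧ k ≤ j)) :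
    hInner (singhThukral α j m) (singhThukral α k l) = if j = k ∧ m = l then 1 else 0 := by
  rw [hInner]
  rcases hdom with hlm | ⟨rfl, hkj⟩
  · -- l < m : value 0
    set G : ℂ → ℂ := fun z =>
      (∏ i, bl (α i) z) ^ (m - l - 1) * (∏ i ∈ Finset.Iio j, bl (α i) z) *
        (∏ i ∈ Finset.Ioi k, bl (α i) z) *
        ((Real.sqrt (1 - ‖α j‖ ^ 2) : ℂ) * (Real.sqrt (1 - ‖α k‖ ^ 2) : ℂ)) *
        (z * ((1 - conj (α j) * z)⁻¹ * (1 - conj (α k) * z)⁻¹)) with hG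
    have heq : ∀ t : T1, singhThukral α j m t * conj (singhThukral α k l t) = G (zfun t) := by
      intro t
      rw [singhThukral_eq_eC, singhThukral_eq_eC, hG]
      exact point_pow hα j k hlm (norm_zfun t)
    have hint : ∫ t : T1, singhThukral α j m t * conj (singhThukral α k l t)
        = ∫ t : T1, G (zfun t) := by
      congr 1
      funext t
      exact heq t
    rw [hint, integral_analytic G ?_]
    · rw [hG]
      simp only [mul_zero, zero_mul]
      rw [if_neg]
      rintro ⟨-, rfl⟩
      omega
    · intro z hz
      have hz' := mem_closedBall_norm hz
      exact (((((diff_prod hα Finset.univ hz').pow _).mul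
        (diff_prod hα (Finset.Iio j) hz')).mul
        (diff_prod hα (Finset.Ioi k) hz')).mul (differentiableAt_const _)).mul
        (differentiableAt_fun_id.mul
          ((diff_inv_one_sub (hα j) hz').mul (diff_inv_one_sub (hα k) hz')))
  · rcases eq_or_lt_of_le hkj with rfl | hkj'
    · -- diagonal
      have heq : ∀ t : T1, singhThukral α k m t * conj (singhThukral α k m t)
          = zfun t * (zfun t - α k)⁻¹ +
            (conj (α k) * zfun t) * (1 - conj (α k) * zfun t)⁻¹ := by
        intro t
        rw [singhThukral_eq_eC]
        exact point_diag hα k m (norm_zfun t)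
      have hint : ∫ t : T1, singhThukral α k m t * conj (singhThukral α k m t)
          = ∫ t : T1, (zfun t * (zfun t - α k)⁻¹ +
            (conj (α k) * zfun t) * (1 - conj (α k) * zfun t)⁻¹) := by
        congr 1
        funext t
        exact heq t
      have int1 : Integrable (fun t : T1 => zfun t * (zfun t - α k)⁻¹) volume := by
        apply integrable_cont
        exact cont_zfun.mul ((cont_zfun.sub continuous_const).inv₀
          fun t => sub_ne (hα k) (norm_zfun t))
      have int2 : Integrable
          (fun t : T1 => (conj (α k) * zfun t) * (1 - conj (α k) * zfun t)⁻¹) volume := by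
        apply integrable_cont
        exact (continuous_const.mul cont_zfun).mul
          ((continuous_const.sub (continuous_const.mul cont_zfun)).inv₀
            fun t => one_sub_ne (hα k) (norm_zfun t).le)
      rw [hint, integral_add int1 int2, integral_pole (α k) (hα k)]
      have h2 : ∫ t : T1, (conj (α k) * zfun t) * (1 - conj (α k) * zfun t)⁻¹
          = (fun z : ℂ => (conj (α k) * z) * (1 - conj (α k) * z)⁻¹) 0 := by
        refine integral_analytic (fun z : ℂ => (conj (α k) * z) * (1 - conj (α k) * z)⁻¹) ?_
        intro z hz
        have hz' := mem_closedBall_norm hz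
        exact (differentiableAt_const _ |>.mul differentiableAt_fun_id).mul
          (diff_inv_one_sub (hα k) hz')
      rw [h2]
      simp
    · -- m = l, k < j : value 0
      set G : ℂ → ℂ := fun z =>
        (∏ i ∈ Finset.Ioo k j, bl (α i) z) *
          ((Real.sqrt (1 - ‖α j‖ ^ 2) : ℂ) * (Real.sqrt (1 - ‖α k‖ ^ 2) : ℂ)) *
          (z * ((1 - conj (α j) * z)⁻¹ * (1 - conj (α k) * z)⁻¹)) with hG
      have heq : ∀ t : T1, singhThukral α j m t * conj (singhThukral α k m t) = G (zfun t) := by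
        intro t
        rw [singhThukral_eq_eC, singhThukral_eq_eC, hG]
        exact point_lt hα hkj' m (norm_zfun t)
      have hint : ∫ t : T1, singhThukral α j m t * conj (singhThukral α k m t)
          = ∫ t : T1, G (zfun t) := by
        congr 1
        funext t
        exact heq t
      rw [hint, integral_analytic G ?_]
      · rw [hG]
        simp only [mul_zero, zero_mul]
        rw [if_neg]
        rintro ⟨rfl, -⟩
        exact absurd hkj' (lt_irrefl _)
      · intro z hz
        have hz' := mem_closedBall_norm hz
        exact ((diff_prod hα (Finset.Ioo k j) hz').mul (differentiableAt_const _)).mul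
          (differentiableAt_fun_id.mul
            ((diff_inv_one_sub (hα j) hz').mul (diff_inv_one_sub (hα k) hz')))

theorem singhThukral_orthonormal (n : ℕ) (hn : 0 < n) (α : Fin n → ℂ)
    (hα : ∀ i, ‖α i‖ < 1) (hα0 : α ⟨0, hn⟩ = 0) :
    ∀ (j k : Fin n) (m l : ℕ),
      hInner (singhThukral α j m) (singhThukral α k l) =
        if j = k ∧ m = l then 1 else 0 := by
  intro j k m l
  rcases lt_trichotomy l m with hlm | rfl | hml
  · exact key_dom α hα j k m l (Or.inl hlm)
  · rcases le_total k j with hkj | hjk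
    · exact key_dom α hα j k l l (Or.inr ⟨rfl, hkj⟩)
    · rw [hInner_conj, key_dom α hα k j l l (Or.inr ⟨rfl, hjk⟩)]
      by_cases h : j = k
      · subst h
        simp
      · rw [if_neg (by rintro ⟨rfl, -⟩; exact h rfl), if_neg (by rintro ⟨rfl, -⟩; exact h rfl)]
        simp
  · rw [hInner_conj, key_dom α hα k j l m (Or.inl hml)]
    have hne : ¬(j = k ∧ m = l) := by rintro ⟨-, rfl⟩; omega
    have hne' : ¬(k = j ∧ l = m) := by rintro ⟨-, rfl⟩; omega
    rw [if_neg hne, if_neg hne']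
    simp
end
end

section
/- Let 1 ≤ p ≤ 2 and let φ ∈ H^p(𝕋) be such that φ·f ∈ H^p for every f ∈ H^2(𝕋). Then φ ∈ H^{2p/(2−p)}(𝕋); in particular φ ∈ H^2. -/
open MeasureTheory Complex ComplexConjugate AddCircle
open scoped ENNReal

noncomputable section

lemma vol_haar : (volume : Measure T1) = haarAddCircle := by
  rw [volume_eq_smul_haarAddCircle]; norm_num

instance : IsProbabilityMeasure (volume : Measure T1) := vol_haar ▸ inferInstance

lemma norm_fourier' (n : ℤ) (x : T1) : ‖(fourier n x : ℂ)‖ = 1 := by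
  rw [fourier_apply]
  exact Circle.norm_coe _

lemma lintegral_rpow_sum_le {r : ℝ} (hr : 1 ≤ r) (u : ℕ → T1 → ℝ≥0∞)
    (hu : ∀ k, Measurable (u k)) (n : ℕ) :
    (∫⁻ t, (∑ k ∈ Finset.range n, u k t) ^ r) ^ (1/r)
      ≤ ∑ k ∈ Finset.range n, (∫⁻ t, (u k t) ^ r) ^ (1/r) := by
  induction n with
  | zero =>
      simp [ENNReal.zero_rpow_of_pos (lt_of_lt_of_le zero_lt_one hr),
        ENNReal.zero_rpow_of_pos (by positivity : (0:ℝ) < 1/r)]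
      linarith
  | succ n ih =>
      have hsum : Measurable (fun t => ∑ k ∈ Finset.range n, u k t) :=
        Finset.measurable_sum _ (fun k _ => hu k)
      calc (∫⁻ t, (∑ k ∈ Finset.range (n+1), u k t) ^ r) ^ (1/r)
          = (∫⁻ t, ((∑ k ∈ Finset.range n, u k t) + u n t) ^ r) ^ (1/r) := by
            simp [Finset.sum_range_succ]
        _ ≤ (∫⁻ t, (∑ k ∈ Finset.range n, u k t) ^ r) ^ (1/r)
              + (∫⁻ t, (u n t) ^ r) ^ (1/r) :=
            ENNReal.lintegral_Lp_add_le hsum.aemeasurable (hu n).aemeasurable hr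
        _ ≤ ∑ k ∈ Finset.range (n+1), (∫⁻ t, (u k t) ^ r) ^ (1/r) := by
            rw [Finset.sum_range_succ]; exact add_le_add_left ih _


lemma mrpow {f : T1 → ℝ≥0∞} (hf : Measurable f) (r : ℝ) :
    Measurable (fun t => f t ^ r) :=
  ENNReal.continuous_rpow_const.measurable.comp hf

lemma iSup_rpow' (a : ℕ → ℝ≥0∞) {r : ℝ} (hr : 0 < r) :
    (⨆ n, a n) ^ r = ⨆ n, a n ^ r := by
  have hrr : r * (1/r) = 1 := by field_simp
  refine le_antisymm ?_ (iSup_le fun n => ENNReal.rpow_le_rpow (le_iSup a n) hr.le)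
  have h1 : ∀ n, a n ≤ (⨆ m, a m ^ r) ^ (1/r) := by
    intro n
    have : a n = (a n ^ r) ^ (1/r) := by
      rw [← ENNReal.rpow_mul, hrr, ENNReal.rpow_one]
    rw [this]
    exact ENNReal.rpow_le_rpow (le_iSup (fun m => a m ^ r) n) (by positivity)
  have h2 : (⨆ n, a n) ≤ (⨆ m, a m ^ r) ^ (1/r) := iSup_le h1
  calc (⨆ n, a n) ^ r ≤ (((⨆ m, a m ^ r) ^ (1/r)) : ℝ≥0∞) ^ r :=
        ENNReal.rpow_le_rpow h2 hr.le
    _ = ⨆ m, a m ^ r := by rw [← ENNReal.rpow_mul, one_div, inv_mul_cancel₀ hr.ne', ENNReal.rpow_one]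

lemma lintegral_rpow_tsum_le {r : ℝ} (hr : 1 ≤ r) (u : ℕ → T1 → ℝ≥0∞)
    (hu : ∀ k, Measurable (u k)) :
    (∫⁻ t, (∑' k, u k t) ^ r) ^ (1/r) ≤ ∑' k, (∫⁻ t, (u k t) ^ r) ^ (1/r) := by
  have hr0 : (0:ℝ) < r := by linarith
  have step1 : (∫⁻ t, (∑' k, u k t) ^ r) = ⨆ n, ∫⁻ t, (∑ k ∈ Finset.range n, u k t) ^ r := by
    have h1 : ∀ t, (∑' k, u k t) = ⨆ n, ∑ k ∈ Finset.range n, u k t := fun t =>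
      ENNReal.tsum_eq_iSup_sum' _ Finset.exists_nat_subset_range
    simp_rw [h1]
    rw [← lintegral_iSup]
    · congr 1; ext t
      exact iSup_rpow' _ hr0
    · intro n
      exact mrpow (Finset.measurable_sum _ (fun k _ => hu k)) r
    · intro m n hmn t
      exact ENNReal.rpow_le_rpow (Finset.sum_le_sum_of_subset
        (Finset.range_subset_range.2 hmn)) hr0.le
  rw [step1, iSup_rpow' _ (by positivity : (0:ℝ) < 1/r)]
  refine iSup_le fun n => le_trans (lintegral_rpow_sum_le hr u hu n) ?_
  exact ENNReal.sum_le_tsum _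

lemma integrable_of_L2 {f : T1 → ℂ} (hf : MemLp f 2 volume) : Integrable f haarAddCircle := by
  rw [← vol_haar]
  exact memLp_one_iff_integrable.1 (hf.mono_exponent (by norm_num))

lemma integrable_fourier_mul {f : T1 → ℂ} (hf : Integrable f haarAddCircle) (n : ℤ) :
    Integrable (fun t => (fourier n t : ℂ) * f t) haarAddCircle :=
  hf.bdd_mul ((fourier n).continuous.aestronglyMeasurable)
    (Filter.Eventually.of_forall fun t => le_of_eq (norm_fourier' n t))

lemma fourierCoeff_eq (f : T1 → ℂ) (n : ℤ) :
    fourierCoeff f n = ∫ t, (fourier (-n) t : ℂ) * f t ∂haarAddCircle := by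
  simp [fourierCoeff, smul_eq_mul]

lemma fourierCoeff_sub {f g : T1 → ℂ} (hf : Integrable f haarAddCircle)
    (hg : Integrable g haarAddCircle) (n : ℤ) :
    fourierCoeff (fun t => f t - g t) n = fourierCoeff f n - fourierCoeff g n := by
  simp_rw [fourierCoeff_eq, mul_sub]
  exact integral_sub (integrable_fourier_mul hf _) (integrable_fourier_mul hg _)

lemma fourierCoeff_congr {f g : T1 → ℂ} (h : f =ᵐ[haarAddCircle] g) (n : ℤ) :
    fourierCoeff f n = fourierCoeff g n := by
  simp_rw [fourierCoeff_eq]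
  exact integral_congr_ae (h.mono fun t ht => by simp only []; rw [ht])

lemma fourierCoeff_conj_shift (h : T1 → ℂ) (n : ℤ) :
    fourierCoeff (fun t => conj ((fourier 1 t : ℂ) * h t)) n
      = conj (fourierCoeff h (-(n+1))) := by
  rw [fourierCoeff_eq, fourierCoeff_eq, ← integral_conj]
  apply integral_congr_ae
  refine Filter.Eventually.of_forall fun t => ?_
  show (fourier (-n)) t * conj ((fourier 1) t * h t) = conj ((fourier (- -(n + 1))) t * h t)
  rw [neg_neg]
  simp only [map_mul, ← fourier_neg]
  rw [show (-(n+1) : ℤ) = -n + -1 by ring, fourier_add]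
  ring

lemma mul_memLp_of_L2 (P : ℝ≥0∞) (φ : T1 → ℂ) (hφm : AEStronglyMeasurable φ volume)
    (hmul : ∀ f : T1 → ℂ, MemHp 2 f → MemLp (fun t => φ t * f t) P volume)
    (g : T1 → ℂ) (hg : MemLp g 2 volume) :
    MemLp (fun t => φ t * g t) P volume := by
  have hgh : MemLp g 2 haarAddCircle := vol_haar ▸ hg
  set G : Lp ℂ 2 (haarAddCircle (T := 1)) := hgh.toLp g with hG
  set b : ℤ → ℂ := fun n => if 0 ≤ n then fourierBasis.repr G n else 0 with hbdef
  have hb : Memℓp b 2 := by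
    have ha := lp.memℓp (fourierBasis.repr G)
    have h2 : (0:ℝ) < (2 : ℝ≥0∞).toReal := by norm_num
    rw [memℓp_gen_iff h2] at ha ⊢
    refine Summable.of_nonneg_of_le (fun n => by positivity) (fun n => ?_) ha
    have hbn : ‖b n‖ ≤ ‖fourierBasis.repr G n‖ := by
      by_cases h : 0 ≤ n <;> simp [hbdef, h]
    exact Real.rpow_le_rpow (norm_nonneg _) hbn (by norm_num)
  set F1 : Lp ℂ 2 (haarAddCircle (T := 1)) := fourierBasis.repr.symm ⟨b, hb⟩ with hF1
  have hrepr : ∀ n, fourierBasis.repr F1 n = b n := by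
    intro n; rw [hF1, LinearIsometryEquiv.apply_symm_apply]
  have hcoefF1 : ∀ n : ℤ, fourierCoeff (F1 : T1 → ℂ) n = b n := fun n => by
    rw [← fourierBasis_repr, hrepr]
  have hf1mem : MemLp (F1 : T1 → ℂ) 2 volume := vol_haar.symm ▸ Lp.memLp F1
  have hf1H : MemHp 2 (F1 : T1 → ℂ) := ⟨hf1mem, fun n hn => by
    rw [hcoefF1]; exact if_neg (not_le.2 hn)⟩
  set h : T1 → ℂ := fun t => g t - (F1 : T1 → ℂ) t with hh
  have hgint : Integrable g haarAddCircle := integrable_of_L2 hg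
  have hf1int : Integrable (F1 : T1 → ℂ) haarAddCircle := integrable_of_L2 hf1mem
  have hcoefg : ∀ n, fourierCoeff g n = fourierBasis.repr G n := by
    intro n
    rw [fourierBasis_repr]
    exact fourierCoeff_congr (hgh.coeFn_toLp).symm n
  have hcoefh : ∀ n : ℤ, 0 ≤ n → fourierCoeff h n = 0 := by
    intro n hn
    rw [hh, fourierCoeff_sub hgint hf1int, hcoefg, hcoefF1, hbdef]
    simp [hn]
  have hhmem : MemLp h 2 volume := hg.sub hf1mem
  set f2 : T1 → ℂ := fun t => conj ((fourier 1 t : ℂ) * h t) with hf2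
  have hnorm_f2 : ∀ t, ‖f2 t‖ = ‖h t‖ := by
    intro t
    rw [hf2]
    simp only [RCLike.norm_conj, norm_mul, norm_fourier', one_mul]
  have hf2mem : MemLp f2 2 volume := by
    refine hhmem.of_le ?_ (Filter.Eventually.of_forall fun t => (hnorm_f2 t).le)
    have : Continuous (starRingEnd ℂ) := continuous_conj
    exact (this.comp_aestronglyMeasurable
      (((fourier 1).continuous.aestronglyMeasurable.mul hhmem.aestronglyMeasurable)))
  have hf2H : MemHp 2 f2 := ⟨hf2mem, fun n hn => by
    rw [hf2, fourierCoeff_conj_shift, hcoefh _ (by omega), map_zero]⟩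
  have hφh : MemLp (fun t => φ t * h t) P volume := by
    refine (hmul f2 hf2H).of_le (hφm.mul hhmem.aestronglyMeasurable) ?_
    refine Filter.Eventually.of_forall fun t => ?_
    simp only [norm_mul]
    rw [hnorm_f2]
  have hφf1 : MemLp (fun t => φ t * (F1 : T1 → ℂ) t) P volume := hmul _ hf1H
  have hsplit : (fun t => φ t * g t)
      = (fun t => φ t * (F1 : T1 → ℂ) t) + (fun t => φ t * h t) := by
    funext t; simp only [Pi.add_apply, hh]; ring
  rw [hsplit]
  exact hφf1.add hφh

lemma no_big {C : ℝ≥0∞} (hC : C ≠ ⊤) (h : ∀ k : ℕ, (2:ℝ≥0∞)^k ≤ C) : False := by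
  obtain ⟨n, hn⟩ := ENNReal.exists_nat_gt hC
  have h1 : (n : ℝ≥0∞) < 2 ^ n := by
    have := (Nat.lt_two_pow_self (n := n))
    exact_mod_cast this
  have h2 : (2:ℝ≥0∞) ^ n ≤ C := h n
  have h3 : C < 2 ^ n := hn.trans h1
  exact absurd h2 (not_le.2 h3)

lemma eLpNorm_ofReal_eq (f : T1 → ℂ) {r : ℝ} (hr : 0 < r) :
    eLpNorm f (ENNReal.ofReal r) volume
      = (∫⁻ t, (‖f t‖₊ : ℝ≥0∞) ^ r) ^ (1/r) := by
  rw [eLpNorm_eq_lintegral_rpow_enorm_toReal (by simp [hr.not_ge]) ENNReal.ofReal_ne_top,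
    ENNReal.toReal_ofReal hr.le]
  simp only [enorm_eq_nnnorm]

lemma enn_norm_ofReal {x : ℝ≥0∞} (hx : x ≠ ⊤) :
    (‖((x.toReal : ℝ) : ℂ)‖₊ : ℝ≥0∞) = x := by
  rw [← enorm_eq_nnnorm, ← ofReal_norm, Complex.norm_real, Real.norm_eq_abs,
    _root_.abs_of_nonneg ENNReal.toReal_nonneg, ENNReal.ofReal_toReal hx]

lemma tsum_half_pow : (∑' k : ℕ, (2:ℝ≥0∞)⁻¹ ^ k) = 2 := by
  rw [ENNReal.tsum_geometric]
  rw [show (1:ℝ≥0∞) - 2⁻¹ = 2⁻¹ by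
    rw [ENNReal.sub_eq_of_eq_add (by simp)]
    rw [ENNReal.inv_two_add_inv_two]]
  simp

lemma g_construct (u : ℕ → T1 → ℝ≥0∞) (hu : ∀ k, Measurable (u k))
    (hJ : ∀ k, (∫⁻ t, (u k t) ^ (2:ℝ)) ^ (1/(2:ℝ)) ≤ (2:ℝ≥0∞)⁻¹ ^ k)
    (hfin : ∀ t, (∑' k, u k t) ≠ ⊤) :
    MemLp (fun t => (((∑' k, u k t).toReal : ℝ) : ℂ)) 2 volume ∧
    ∀ t, (‖(((∑' k, u k t).toReal : ℝ) : ℂ)‖₊ : ℝ≥0∞) = ∑' k, u k t := by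
  have hnorm : ∀ t, (‖(((∑' k, u k t).toReal : ℝ) : ℂ)‖₊ : ℝ≥0∞) = ∑' k, u k t :=
    fun t => enn_norm_ofReal (hfin t)
  refine ⟨⟨?_, ?_⟩, hnorm⟩
  · exact (Complex.measurable_ofReal.comp
      ((Measurable.ennreal_tsum hu).ennreal_toReal)).aestronglyMeasurable
  · rw [show (2:ℝ≥0∞) = ENNReal.ofReal 2 from (ENNReal.ofReal_ofNat 2).symm,
      eLpNorm_ofReal_eq _ (by norm_num : (0:ℝ) < 2)]
    have h1 : (∫⁻ t, (‖(((∑' k, u k t).toReal : ℝ) : ℂ)‖₊ : ℝ≥0∞) ^ (2:ℝ)) ^ (1/(2:ℝ))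
        = (∫⁻ t, (∑' k, u k t) ^ (2:ℝ)) ^ (1/(2:ℝ)) := by
      congr 1
      apply lintegral_congr
      intro t
      rw [hnorm t]
    rw [h1]
    calc (∫⁻ t, (∑' k, u k t) ^ (2:ℝ)) ^ (1/(2:ℝ))
        ≤ ∑' k, (∫⁻ t, (u k t) ^ (2:ℝ)) ^ (1/(2:ℝ)) :=
          lintegral_rpow_tsum_le (by norm_num) u hu
      _ ≤ ∑' k : ℕ, (2:ℝ≥0∞)⁻¹ ^ k := ENNReal.tsum_le_tsum hJ
      _ = 2 := tsum_half_pow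
      _ < ⊤ := by norm_num

lemma indicator_rpow (Ek : Set T1) (ck : ℝ≥0∞) {r : ℝ} (hr : 0 < r) (t : T1) :
    (Ek.indicator (fun _ => ck) t) ^ r = Ek.indicator (fun _ => ck ^ r) t := by
  by_cases h : t ∈ Ek
  · simp [Set.indicator_of_mem h]
  · simp [Set.indicator_of_notMem h, ENNReal.zero_rpow_of_pos hr]

lemma lintegral_indicator_rpow {Ek : Set T1} (hEk : MeasurableSet Ek) (ck : ℝ≥0∞) {r : ℝ}
    (hr : 0 < r) :
    (∫⁻ t, (Ek.indicator (fun _ => ck) t) ^ r) = ck ^ r * volume Ek := by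
  simp_rw [indicator_rpow Ek ck hr]
  rw [lintegral_indicator_const hEk]

lemma sqrt_cancel {m : ℝ≥0∞} (hm0 : m ≠ 0) (hmt : m ≠ ⊤) (ck : ℝ≥0∞) :
    ((ck * (m ^ (1/2:ℝ))⁻¹) ^ (2:ℝ) * m) ^ (1/(2:ℝ)) = ck := by
  have hs0 : m ^ (1/2:ℝ) ≠ 0 := by simp [ENNReal.rpow_eq_zero_iff, hm0, hmt]
  have hst : m ^ (1/2:ℝ) ≠ ⊤ := ENNReal.rpow_ne_top_of_nonneg (by norm_num) hmt
  rw [ENNReal.mul_rpow_of_nonneg _ _ (by norm_num : (0:ℝ) ≤ 1/2)]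
  rw [← ENNReal.rpow_mul]
  rw [show ((2:ℝ)*(1/2)) = 1 by norm_num, ENNReal.rpow_one]
  rw [mul_assoc, ENNReal.inv_mul_cancel hs0 hst, mul_one]

lemma linf_of_mul (ψ : T1 → ℂ) (hψ : Measurable ψ)
    (H : ∀ g : T1 → ℂ, MemLp g 2 volume → MemLp (fun t => ψ t * g t) 2 volume) :
    MemLp ψ ⊤ volume := by
  by_contra hcon
  have htop : eLpNormEssSup ψ volume = ⊤ := by
    by_contra h
    exact hcon ⟨hψ.aestronglyMeasurable, by
      rw [eLpNorm_exponent_top]; exact lt_top_iff_ne_top.2 h⟩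
  have hpos : ∀ c : ℝ≥0∞, c ≠ ⊤ → 0 < volume {t | c < (‖ψ t‖₊ : ℝ≥0∞)} := by
    intro c hc
    by_contra h
    push_neg at h
    have h0 : volume {t | c < (‖ψ t‖₊:ℝ≥0∞)} = 0 := le_antisymm h (zero_le)
    have hae : ∀ᵐ t ∂(volume : Measure T1), (‖ψ t‖₊:ℝ≥0∞) ≤ c := by
      rw [ae_iff]
      convert h0 using 2
      ext t
      simp [not_le]
    have hle : eLpNormEssSup ψ volume ≤ c := essSup_le_of_ae_le c hae
    rw [htop] at hle
    exact hc (top_le_iff.1 hle)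
  set E : ℕ → Set T1 := fun k => {t | (4:ℝ≥0∞)^k < (‖ψ t‖₊:ℝ≥0∞)} with hE
  have hEm : ∀ k, MeasurableSet (E k) := fun k => measurableSet_lt measurable_const hψ.enorm
  set m : ℕ → ℝ≥0∞ := fun k => volume (E k) with hm
  have hm0 : ∀ k, m k ≠ 0 := fun k =>
    (hpos _ (ENNReal.pow_ne_top (by norm_num))).ne'
  have hmtop : ∀ k, m k ≠ ⊤ := fun k => (measure_ne_top _ _)
  set s : ℕ → ℝ≥0∞ := fun k => (m k) ^ (1/2:ℝ) with hs
  have hs0 : ∀ k, s k ≠ 0 := fun k => by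
    simp [hs, ENNReal.rpow_eq_zero_iff, hm0 k, hmtop k]
  set c : ℕ → ℝ≥0∞ := fun k => (2:ℝ≥0∞)⁻¹^k * (s k)⁻¹ with hc
  have hctop : ∀ k, c k ≠ ⊤ := fun k => ENNReal.mul_ne_top
    (ENNReal.pow_ne_top (by simp)) (ENNReal.inv_ne_top.2 (hs0 k))
  set u : ℕ → T1 → ℝ≥0∞ := fun k => (E k).indicator (fun _ => c k) with hu
  have hum : ∀ k, Measurable (u k) := fun k => measurable_const.indicator (hEm k)
  have hJ : ∀ k, (∫⁻ t, (u k t) ^ (2:ℝ)) ^ (1/(2:ℝ)) ≤ (2:ℝ≥0∞)⁻¹ ^ k := by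
    intro k
    rw [hu]
    rw [lintegral_indicator_rpow (hEm k) (c k) (by norm_num : (0:ℝ) < 2)]
    rw [show c k = (2:ℝ≥0∞)⁻¹^k * (s k)⁻¹ from rfl, hs]
    rw [sqrt_cancel (hm0 k) (hmtop k)]
  have hfin : ∀ t, (∑' k, u k t) ≠ ⊤ := by
    intro t
    obtain ⟨n, hn⟩ := ENNReal.exists_nat_gt (show (‖ψ t‖₊:ℝ≥0∞) ≠ ⊤ from ENNReal.coe_ne_top)
    have hvanish : ∀ k ∉ Finset.range n, u k t = 0 := by
      intro k hk
      simp only [Finset.mem_range, not_lt] at hk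
      have h2 : (n:ℝ≥0∞) ≤ 4^k := by
        calc (n:ℝ≥0∞) ≤ 4^n := by
              have h3 : (n:ℝ≥0∞) < 2^n := by exact_mod_cast (Nat.lt_two_pow_self (n := n))
              refine h3.le.trans (pow_le_pow_left₀ (by norm_num) (by norm_num) n)
          _ ≤ 4^k := pow_le_pow_right₀ (by norm_num) hk
      have hnot : t ∉ E k := by
        simp only [hE, Set.mem_setOf_eq, not_lt]
        exact le_of_lt (lt_of_lt_of_le hn h2)
      simp [hu, Set.indicator_of_notMem hnot]
    rw [tsum_eq_sum hvanish]
    refine (ENNReal.sum_lt_top.2 fun k _ => ?_).ne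
    calc u k t ≤ c k := by
          rw [hu]; exact Set.indicator_le' (fun _ _ => le_rfl) (fun _ _ => zero_le) t
      _ < ⊤ := lt_top_iff_ne_top.2 (hctop k)
  obtain ⟨hgmem, hgnorm⟩ := g_construct u hum hJ hfin
  have hψg := H _ hgmem
  have hCfin : eLpNorm (fun t => ψ t * (((∑' k, u k t).toReal : ℝ) : ℂ)) 2 volume ≠ ⊤ :=
    hψg.2.ne
  refine no_big hCfin fun k => ?_
  have hlow_ptwise : ∀ t, ((E k).indicator (fun _ => (4:ℝ≥0∞)^k * c k) t)
      ≤ (‖ψ t * (((∑' j, u j t).toReal : ℝ) : ℂ)‖₊ : ℝ≥0∞) := by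
    intro t
    by_cases h : t ∈ E k
    · rw [Set.indicator_of_mem h]
      have h1 : (‖ψ t * (((∑' j, u j t).toReal : ℝ) : ℂ)‖₊ : ℝ≥0∞)
          = (‖ψ t‖₊:ℝ≥0∞) * (‖(((∑' j, u j t).toReal : ℝ) : ℂ)‖₊:ℝ≥0∞) := by
        rw [nnnorm_mul]; push_cast; ring
      rw [h1, hgnorm t]
      have h2 : (4:ℝ≥0∞)^k < (‖ψ t‖₊:ℝ≥0∞) := h
      have h3 : c k ≤ ∑' j, u j t := by
        have : c k = u k t := by rw [hu]; simp [Set.indicator_of_mem h]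
        rw [this]
        exact ENNReal.le_tsum k
      exact mul_le_mul' h2.le h3
    · rw [Set.indicator_of_notMem h]; exact zero_le
  have heq : eLpNorm (fun t => ψ t * (((∑' j, u j t).toReal : ℝ) : ℂ)) 2 volume
      = (∫⁻ t, (‖ψ t * (((∑' j, u j t).toReal : ℝ) : ℂ)‖₊:ℝ≥0∞)^(2:ℝ)) ^ (1/(2:ℝ)) := by
    rw [show (2:ℝ≥0∞) = ENNReal.ofReal 2 from (ENNReal.ofReal_ofNat 2).symm,
      eLpNorm_ofReal_eq _ (by norm_num : (0:ℝ) < 2)]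
  rw [heq]
  have hint : ((4:ℝ≥0∞)^k * c k) ^ (2:ℝ) * m k
      ≤ ∫⁻ t, (‖ψ t * (((∑' j, u j t).toReal : ℝ) : ℂ)‖₊:ℝ≥0∞)^(2:ℝ) := by
    rw [← lintegral_indicator_rpow (hEm k) _ (by norm_num : (0:ℝ) < 2)]
    exact lintegral_mono fun t => ENNReal.rpow_le_rpow (hlow_ptwise t) (by norm_num)
  calc (2:ℝ≥0∞)^k = 4^k * 2⁻¹^k := by
        rw [← mul_pow, show (4:ℝ≥0∞) * 2⁻¹ = 2 by
          rw [show (4:ℝ≥0∞) = 2*2 by norm_num, mul_assoc,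
            ENNReal.mul_inv_cancel two_ne_zero ENNReal.ofNat_ne_top, mul_one]]
    _ = ((4^k * c k) ^ (2:ℝ) * m k) ^ (1/(2:ℝ)) := by
        rw [show (4:ℝ≥0∞)^k * c k = ((4:ℝ≥0∞)^k * 2⁻¹^k) * (s k)⁻¹ by rw [hc]; ring, hs,
          sqrt_cancel (hm0 k) (hmtop k)]
    _ ≤ _ := ENNReal.rpow_le_rpow hint (by norm_num)

lemma lq_of_mul (p q : ℝ) (hp1 : 1 ≤ p) (hplt : p < 2) (hq : q = 2*p/(2-p))
    (ψ : T1 → ℂ) (hψ : Measurable ψ)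
    (H : ∀ g : T1 → ℂ, MemLp g 2 volume →
      MemLp (fun t => ψ t * g t) (ENNReal.ofReal p) volume) :
    MemLp ψ (ENNReal.ofReal q) volume := by
  have hp0 : (0:ℝ) < p := by linarith
  have h2p : (0:ℝ) < 2 - p := by linarith
  have hq2 : (2:ℝ) ≤ q := by rw [hq, le_div_iff₀ h2p]; nlinarith
  have hq0 : (0:ℝ) < q := by linarith
  have hqprod : q * (2 - p) = 2 * p := by rw [hq]; field_simp
  have hqid : (1 + q/2) * p = q := by nlinarith
  have hinv : -(1/2) + 1/p = 1/q := by
    rw [hq]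
    rw [one_div_div]
    field_simp
    ring
  by_contra hcon
  have htop : (∫⁻ t, (‖ψ t‖₊:ℝ≥0∞) ^ q) = ⊤ := by
    by_contra h
    apply hcon
    refine ⟨hψ.aestronglyMeasurable, ?_⟩
    rw [eLpNorm_ofReal_eq _ hq0]
    exact lt_top_iff_ne_top.2 (ENNReal.rpow_ne_top_of_nonneg (by positivity) h)
  set w : T1 → ℝ≥0∞ := fun t => (‖ψ t‖₊:ℝ≥0∞) with hw
  have hwm : Measurable w := hψ.enorm
  set trunc : ℕ → T1 → ℝ≥0∞ := fun N t => if w t ≤ N then w t else 0 with htr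
  have htrm : ∀ N : ℕ, Measurable (trunc N) := fun N =>
    Measurable.ite (measurableSet_le hwm measurable_const) hwm measurable_const
  have htrle : ∀ N t, trunc N t ≤ w t := by
    intro N t; rw [htr]; dsimp only; split
    · exact le_rfl
    · exact zero_le
  have htrleN : ∀ (N : ℕ) t, trunc N t ≤ (N:ℝ≥0∞) := by
    intro N t; rw [htr]; dsimp only; split
    · assumption
    · exact zero_le
  have htrmono : ∀ (N N' : ℕ), N ≤ N' → ∀ t, trunc N t ≤ trunc N' t := by
    intro N N' hNN t; rw [htr]; dsimp only
    by_cases h : w t ≤ (N:ℝ≥0∞)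
    · rw [if_pos h, if_pos (h.trans (by exact_mod_cast Nat.cast_le.2 hNN))]
    · rw [if_neg h]; exact zero_le
  set M : ℕ → ℝ≥0∞ := fun N => ∫⁻ t, (trunc N t) ^ q with hM
  have hMne : ∀ N, M N ≠ ⊤ := by
    intro N
    have hle : M N ≤ ((N:ℝ≥0∞))^q := by
      calc M N ≤ ∫⁻ _t : T1, ((N:ℝ≥0∞))^q :=
            lintegral_mono (fun t => ENNReal.rpow_le_rpow (htrleN N t) hq0.le)
        _ = ((N:ℝ≥0∞))^q * volume (Set.univ : Set T1) := lintegral_const _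
        _ = ((N:ℝ≥0∞))^q := by simp
    exact ne_top_of_le_ne_top (ENNReal.rpow_ne_top_of_nonneg hq0.le (ENNReal.natCast_ne_top N)) hle
  have hMtop : (⨆ N, M N) = ⊤ := by
    rw [hM]
    rw [← lintegral_iSup (fun N => mrpow (htrm N) q)
      (fun N N' hNN t => ENNReal.rpow_le_rpow (htrmono N N' hNN t) hq0.le)]
    rw [← htop]
    apply lintegral_congr
    intro t
    rw [← iSup_rpow' (fun N => trunc N t) hq0]
    congr 1
    obtain ⟨n, hn⟩ := ENNReal.exists_nat_gt (show w t ≠ ⊤ from ENNReal.coe_ne_top)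
    apply le_antisymm (iSup_le fun N => htrle N t)
    refine le_trans ?_ (le_iSup _ n)
    rw [htr]; dsimp only; rw [if_pos hn.le]
  have hchoose : ∀ k : ℕ, ∃ N, ((4:ℝ≥0∞)^k)^q < M N := by
    intro k
    exact iSup_eq_top.1 hMtop _ (lt_top_iff_ne_top.2
      (ENNReal.rpow_ne_top_of_nonneg hq0.le (ENNReal.pow_ne_top (by norm_num))))
  choose N hN using hchoose
  set Mk : ℕ → ℝ≥0∞ := fun k => M (N k) with hMk
  have h4k1 : ∀ k : ℕ, (1:ℝ≥0∞) ≤ ((4:ℝ≥0∞)^k)^q := by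
    intro k
    calc (1:ℝ≥0∞) = (1:ℝ≥0∞)^q := (ENNReal.one_rpow q).symm
      _ ≤ ((4:ℝ≥0∞)^k)^q := ENNReal.rpow_le_rpow (one_le_pow_of_one_le' (by norm_num) k) hq0.le
  have hMk1 : ∀ k, 1 ≤ Mk k := fun k => le_trans (h4k1 k) (hN k).le
  have hMkt : ∀ k, Mk k ≠ ⊤ := fun k => hMne _
  have hMk0 : ∀ k, Mk k ≠ 0 := fun k => (lt_of_lt_of_le zero_lt_one (hMk1 k)).ne'
  set A : ℕ → ℝ≥0∞ := fun k => (Mk k) ^ (1/2:ℝ) with hA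
  have hA0 : ∀ k, A k ≠ 0 := fun k => by
    simp [hA, ENNReal.rpow_eq_zero_iff, hMk0 k, hMkt k]
  have hA1 : ∀ k, 1 ≤ A k := fun k => by
    rw [hA]
    calc (1:ℝ≥0∞) = (1:ℝ≥0∞)^(1/2:ℝ) := (ENNReal.one_rpow _).symm
      _ ≤ (Mk k)^(1/2:ℝ) := ENNReal.rpow_le_rpow (hMk1 k) (by norm_num)
  set c : ℕ → ℝ≥0∞ := fun k => (2:ℝ≥0∞)⁻¹^k * (A k)⁻¹ with hc
  set u : ℕ → T1 → ℝ≥0∞ := fun k t => c k * (trunc (N k) t) ^ ((q/2):ℝ) with hu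
  have hum : ∀ k, Measurable (u k) := fun k => (mrpow (htrm (N k)) _).const_mul _
  have hJgen : ∀ (k : ℕ) (r : ℝ), 0 < r →
      (∫⁻ t, (u k t) ^ r) = (c k)^r * ∫⁻ t, (trunc (N k) t) ^ ((q/2) * r) := by
    intro k r hr
    have hpt : ∀ t, (u k t) ^ r = (c k)^r * (trunc (N k) t) ^ ((q/2) * r) := by
      intro t
      rw [hu]; dsimp only
      rw [ENNReal.mul_rpow_of_nonneg _ _ hr.le, ← ENNReal.rpow_mul]
    simp_rw [hpt]
    rw [lintegral_const_mul _ (mrpow (htrm (N k)) _)]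
  have hJ : ∀ k, (∫⁻ t, (u k t) ^ (2:ℝ)) ^ (1/(2:ℝ)) ≤ (2:ℝ≥0∞)⁻¹ ^ k := by
    intro k
    rw [hJgen k 2 (by norm_num), show (q/2) * 2 = q by ring]
    rw [show (∫⁻ t, (trunc (N k) t) ^ q) = Mk k from rfl]
    rw [hc]; dsimp only
    rw [hA]
    rw [sqrt_cancel (hMk0 k) (hMkt k)]
  have hfin : ∀ t, (∑' k, u k t) ≠ ⊤ := by
    intro t
    have hbound : (∑' k, u k t) ≤ 2 * (w t) ^ ((q/2):ℝ) := by
      calc (∑' k, u k t) ≤ ∑' k : ℕ, (2:ℝ≥0∞)⁻¹^k * (w t) ^ ((q/2):ℝ) := by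
            refine ENNReal.tsum_le_tsum fun k => ?_
            rw [hu, hc]; dsimp only
            rw [mul_assoc]
            refine mul_le_mul' le_rfl ?_
            refine le_trans (mul_le_mul' (ENNReal.inv_le_one.2 (hA1 k)) le_rfl) ?_
            rw [one_mul]
            exact ENNReal.rpow_le_rpow (htrle _ t) (by positivity)
        _ = (∑' k : ℕ, (2:ℝ≥0∞)⁻¹^k) * (w t) ^ ((q/2):ℝ) := ENNReal.tsum_mul_right
        _ = 2 * (w t) ^ ((q/2):ℝ) := by rw [tsum_half_pow]
    refine ne_top_of_le_ne_top ?_ hbound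
    exact ENNReal.mul_ne_top (by norm_num)
      (ENNReal.rpow_ne_top_of_nonneg (by positivity) ENNReal.coe_ne_top)
  obtain ⟨hgmem, hgnorm⟩ := g_construct u hum hJ hfin
  have hψg := H _ hgmem
  have hCfin : eLpNorm (fun t => ψ t * (((∑' k, u k t).toReal : ℝ) : ℂ))
      (ENNReal.ofReal p) volume ≠ ⊤ := hψg.2.ne
  exact no_big hCfin fun k => by
    have hlow_pt : ∀ t, c k * (trunc (N k) t) ^ ((1 + q/2 : ℝ))
        ≤ (‖ψ t * (((∑' j, u j t).toReal : ℝ) : ℂ)‖₊ : ℝ≥0∞) := by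
      intro t
      have h1 : (‖ψ t * (((∑' j, u j t).toReal : ℝ) : ℂ)‖₊ : ℝ≥0∞)
          = w t * (∑' j, u j t) := by
        rw [nnnorm_mul, ENNReal.coe_mul, hgnorm t]
      rw [h1]
      calc c k * (trunc (N k) t) ^ ((1 + q/2 : ℝ))
          = trunc (N k) t * (c k * (trunc (N k) t) ^ ((q/2):ℝ)) := by
            rw [ENNReal.rpow_add_of_nonneg _ _ (by norm_num) (by positivity),
              ENNReal.rpow_one]
            ring
        _ ≤ w t * (c k * (trunc (N k) t) ^ ((q/2):ℝ)) :=
            mul_le_mul' (htrle _ t) le_rfl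
        _ ≤ w t * (∑' j, u j t) := by
            refine mul_le_mul' le_rfl ?_
            rw [show c k * (trunc (N k) t) ^ ((q/2):ℝ) = u k t from rfl]
            exact ENNReal.le_tsum k
    have heq : eLpNorm (fun t => ψ t * (((∑' j, u j t).toReal : ℝ) : ℂ))
        (ENNReal.ofReal p) volume
        = (∫⁻ t, (‖ψ t * (((∑' j, u j t).toReal : ℝ) : ℂ)‖₊:ℝ≥0∞)^p) ^ (1/p) :=
      eLpNorm_ofReal_eq _ hp0
    rw [heq]
    have hint : (c k)^p * Mk k
        ≤ ∫⁻ t, (‖ψ t * (((∑' j, u j t).toReal : ℝ) : ℂ)‖₊:ℝ≥0∞)^p := by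
      have h2 : (∫⁻ t, (c k * (trunc (N k) t) ^ ((1 + q/2 : ℝ)))^p)
          = (c k)^p * Mk k := by
        have hpt : ∀ t, (c k * (trunc (N k) t) ^ ((1 + q/2 : ℝ)))^p
            = (c k)^p * (trunc (N k) t) ^ q := by
          intro t
          rw [ENNReal.mul_rpow_of_nonneg _ _ hp0.le, ← ENNReal.rpow_mul, hqid]
        simp_rw [hpt]
        rw [lintegral_const_mul _ (mrpow (htrm (N k)) _)]
      rw [← h2]
      exact lintegral_mono fun t => ENNReal.rpow_le_rpow (hlow_pt t) hp0.le
    calc (2:ℝ≥0∞)^k = 2⁻¹^k * 4^k := by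
          rw [← mul_pow, show (2:ℝ≥0∞)⁻¹ * 4 = 2 by
            rw [show (4:ℝ≥0∞) = 2*2 by norm_num, ← mul_assoc,
              ENNReal.inv_mul_cancel two_ne_zero ENNReal.ofNat_ne_top, one_mul]]
      _ ≤ 2⁻¹^k * (Mk k) ^ (1/q) := by
          refine mul_le_mul' le_rfl ?_
          calc (4:ℝ≥0∞)^k = (((4:ℝ≥0∞)^k)^q)^(1/q) := by
                rw [← ENNReal.rpow_mul, mul_one_div, div_self hq0.ne', ENNReal.rpow_one]
            _ ≤ (Mk k) ^ (1/q) := ENNReal.rpow_le_rpow (hN k).le (by positivity)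
      _ = (c k) * (Mk k) ^ (1/p) := by
          rw [hc]; dsimp only
          rw [hA, ← ENNReal.rpow_neg, mul_assoc,
            ← ENNReal.rpow_add _ _ (hMk0 k) (hMkt k), hinv]
      _ = ((c k)^p * Mk k) ^ (1/p) := by
          rw [ENNReal.mul_rpow_of_nonneg _ _ (by positivity), ← ENNReal.rpow_mul,
            mul_one_div, div_self hp0.ne', ENNReal.rpow_one]
      _ ≤ _ := ENNReal.rpow_le_rpow hint (by positivity)

theorem Hp_multiplier_in_H2pdiv (p : ℝ) (hp1 : 1 ≤ p) (hp2 : p ≤ 2) (φ : T1 → ℂ)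
    (hφ : MemHp (ENNReal.ofReal p) φ)
    (hmul : ∀ f : T1 → ℂ, MemHp 2 f → MemHp (ENNReal.ofReal p) (fun t => φ t * f t)) :
    MemHp (if p = 2 then ⊤ else ENNReal.ofReal (2 * p / (2 - p))) φ ∧ MemHp 2 φ := by
  obtain ⟨hφmem, hφcoef⟩ := hφ
  have haesm := hφmem.aestronglyMeasurable
  set ψ := haesm.mk φ with hψdef
  have hψmeas : Measurable ψ := haesm.stronglyMeasurable_mk.measurable
  have hae : φ =ᵐ[volume] ψ := haesm.ae_eq_mk
  have H : ∀ g : T1 → ℂ, MemLp g 2 volume →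
      MemLp (fun t => ψ t * g t) (ENNReal.ofReal p) volume := by
    intro g hg
    have h1 := mul_memLp_of_L2 (ENNReal.ofReal p) φ haesm (fun f hf => (hmul f hf).1) g hg
    exact MemLp.ae_eq (hae.mono fun t ht => by dsimp only; rw [ht]) h1
  by_cases hp2' : p = 2
  · subst hp2'
    have hP2 : ENNReal.ofReal (2:ℝ) = 2 := ENNReal.ofReal_ofNat 2
    have hψtop : MemLp ψ ⊤ volume := linf_of_mul ψ hψmeas (fun g hg => hP2 ▸ H g hg)
    have hφtop : MemLp φ ⊤ volume := MemLp.ae_eq hae.symm hψtop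
    refine ⟨?_, ⟨hφtop.mono_exponent le_top, hφcoef⟩⟩
    rw [if_pos rfl]
    exact ⟨hφtop, hφcoef⟩
  · have hplt : p < 2 := lt_of_le_of_ne hp2 hp2'
    have hψq : MemLp ψ (ENNReal.ofReal (2*p/(2-p))) volume :=
      lq_of_mul p _ hp1 hplt rfl ψ hψmeas H
    have hφq : MemLp φ (ENNReal.ofReal (2*p/(2-p))) volume := MemLp.ae_eq hae.symm hψq
    have hq2 : (2:ℝ≥0∞) ≤ ENNReal.ofReal (2*p/(2-p)) := by
      rw [show (2:ℝ≥0∞) = ENNReal.ofReal 2 from (ENNReal.ofReal_ofNat 2).symm]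
      apply ENNReal.ofReal_le_ofReal
      rw [le_div_iff₀ (by linarith)]
      nlinarith
    refine ⟨?_, ⟨hφq.mono_exponent hq2, hφcoef⟩⟩
    rw [if_neg hp2']
    exact ⟨hφq, hφcoef⟩
end
end
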